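/- Let K ⊆ ℂ be a number field with K = K̄ (closed under complex conjugation), K ⊄ ℝ, [K:ℚ] = d ≥ 4, with exactly s pairs of complex embeddings and t real embeddings (d = 2s + t), and let ★ : 𝒪_K → ℂ^{s−1} × ℝ^t be the map z ↦ (σ₂(z),…,σ_{s}(z),σ_{s+1}(z),…,σ_{s+t}(z)) collecting all embeddings of K into ℂ except the identity and complex conjugation (one from each conjugate pair). Then the image 𝒪_K^★ is dense in ℂ^{s−1} × ℝ^t ≅ ℝ^{d−2}. -/

import Mathlib

open ComplexConjugate

/-- Multiplication by a nonzero complex number as an ℝ-linear equiv. -/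
noncomputable def mulLinEquiv (a : ℂ) (ha : a ≠ 0) : ℂ ≃ₗ[ℝ] ℂ where
  toFun z := a * z
  invFun z := a⁻¹ * z
  map_add' := mul_add a
  map_smul' r z := by simp [Complex.real_smul]; ring
  left_inv z := by field_simp
  right_inv z := by field_simp

/-- Coordinatewise multiplication as an ℝ-linear equiv on `Fin m → ℂ`. -/
noncomputable def piMulLinEquiv {m : ℕ} (c : Fin m → ℂ) (hc : ∀ i, c i ≠ 0) :
    (Fin m → ℂ) ≃ₗ[ℝ] (Fin m → ℂ) :=
  LinearEquiv.piCongrRight (fun i => mulLinEquiv (c i) (hc i))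

lemma piMulLinEquiv_apply {m : ℕ} (c : Fin m → ℂ) (hc : ∀ i, c i ≠ 0) (x : Fin m → ℂ) (i : Fin m) :
    piMulLinEquiv c hc x i = c i * x i := rfl

lemma piMulLinEquiv_symm_apply {m : ℕ} (c : Fin m → ℂ) (hc : ∀ i, c i ≠ 0) (x : Fin m → ℂ)
    (i : Fin m) : (piMulLinEquiv c hc).symm x i = (c i)⁻¹ * x i := rfl

/-- Density criterion: if at every scale ε there is a family of `k` small elements of a
subgroup `G` whose real span contains `x`, then `x` is in the closure of `G`. -/
lemma mem_closure_of_small_spanning {m k : ℕ} (G : AddSubgroup (Fin m → ℂ)) (x : Fin m → ℂ)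
    (H : ∀ ε : ℝ, 0 < ε → ∃ v : Fin k → (Fin m → ℂ),
      (∀ j, v j ∈ G ∧ ‖v j‖ ≤ ε) ∧ x ∈ Submodule.span ℝ (Set.range v)) :
    x ∈ closure (G : Set (Fin m → ℂ)) := by
  rw [Metric.mem_closure_iff]
  intro δ hδ
  have hε : (0:ℝ) < δ / (k + 1) := by positivity
  obtain ⟨v, hv, hx⟩ := H _ hε
  rw [Submodule.mem_span_range_iff_exists_fun ℝ] at hx
  obtain ⟨c, hc⟩ := hx
  refine ⟨∑ j, (⌊c j⌋ : ℤ) • v j, AddSubgroup.sum_mem _ fun j _ => G.zsmul_mem (hv j).1 _, ?_⟩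
  rw [dist_eq_norm, ← hc]
  have : (∑ j, c j • v j) - (∑ j, (⌊c j⌋ : ℤ) • v j) = ∑ j, (c j - ⌊c j⌋) • v j := by
    rw [← Finset.sum_sub_distrib]
    congr 1; funext j
    rw [← Int.cast_smul_eq_zsmul ℝ, ← sub_smul]
  rw [this]
  calc ‖∑ j, (c j - ⌊c j⌋) • v j‖ ≤ ∑ j, ‖(c j - ⌊c j⌋) • v j‖ := norm_sum_le _ _
    _ ≤ ∑ _j : Fin k, δ / (k+1) := by
        refine Finset.sum_le_sum fun j _ => ?_
        rw [norm_smul]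
        have h1 : |c j - ⌊c j⌋| ≤ 1 := by
          rw [abs_of_nonneg (by linarith [Int.floor_le (c j)])]
          linarith [Int.lt_floor_add_one (c j)]
        calc |c j - ⌊c j⌋| * ‖v j‖ ≤ 1 * (δ / (k+1)) := by
              apply mul_le_mul h1 (hv j).2 (norm_nonneg _) zero_le_one
          _ = δ / (k+1) := one_mul _
    _ < δ := by
        rw [Finset.sum_const, Finset.card_univ, Fintype.card_fin, nsmul_eq_mul]
        have hk1 : (0:ℝ) < (k:ℝ)+1 := by positivity
        rw [← mul_div_assoc, div_lt_iff₀ hk1]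
        nlinarith


/-- In a finite-dimensional space, the span of any set is also the span of a finite family
of elements of the set. -/
lemma exists_finite_spanning_family {V : Type*} [AddCommGroup V] [Module ℝ V]
    [FiniteDimensional ℝ V] (S : Set V) :
    ∃ (k : ℕ) (v : Fin k → V), (∀ j, v j ∈ S) ∧
      Submodule.span ℝ (Set.range v) = Submodule.span ℝ S := by
  classical
  obtain ⟨G, hGspan⟩ :=
    Submodule.fg_def.mp (IsNoetherian.noetherian (Submodule.span ℝ S)) |>.imp (fun _ h => h)
  obtain ⟨hGfin, hGspan⟩ := hGspan
  have h1 : ∀ g ∈ G, ∃ T : Finset V, ↑T ⊆ S ∧ g ∈ Submodule.span ℝ (T : Set V) := fun g hg =>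
    Submodule.mem_span_finite_of_mem_span (hGspan ▸ Submodule.subset_span hg)
  choose T hTS hgT using h1
  have hGfin' : Fintype G := hGfin.fintype
  let F : Finset V := Finset.univ.biUnion (fun g : G => T g g.2)
  have hFS : (F : Set V) ⊆ S := by
    intro y hy
    simp only [F, Finset.coe_biUnion, Set.mem_iUnion, Finset.mem_coe] at hy
    obtain ⟨g, _, hy⟩ := hy
    exact hTS g g.2 hy
  have hspan : Submodule.span ℝ (F : Set V) = Submodule.span ℝ S := by
    apply le_antisymm (Submodule.span_mono hFS)
    rw [← hGspan, Submodule.span_le]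
    intro g hg
    refine Submodule.span_mono ?_ (hgT g hg)
    intro y hy
    simp only [F, Finset.coe_biUnion, Set.mem_iUnion, Finset.mem_coe]
    exact ⟨⟨g, hg⟩, Finset.mem_univ _, hy⟩
  refine ⟨F.card, fun j => (F.equivFin.symm j : V), fun j => hFS (Finset.coe_mem _), ?_⟩
  rw [← hspan]
  congr 1
  ext y
  simp only [Set.mem_range, Finset.mem_coe]
  constructor
  · rintro ⟨j, rfl⟩; exact Finset.coe_mem _
  · intro hy; exact ⟨F.equivFin ⟨y, hy⟩, by simp⟩


/-- Complex conjugation as a `ℚ`-algebra homomorphism. -/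
noncomputable def conjA : ℂ →ₐ[ℚ] ℂ :=
  (Complex.conjAe.restrictScalars ℚ).toAlgHom

lemma conjA_apply (z : ℂ) : conjA z = conj z := rfl

set_option maxHeartbeats 1000000 in
/-- Counting argument: the embeddings `σ i` for `i < s - 1` are genuinely complex. -/
lemma sigma_complex (K : IntermediateField ℚ ℂ) [FiniteDimensional ℚ K]
    (s t : ℕ) (hs : 1 ≤ s) (hd : Module.finrank ℚ K = 2 * s + t)
    (σ : Fin (s - 1 + t) → (K →ₐ[ℚ] ℂ))
    (hrealemb : ∀ i : Fin (s - 1 + t), s - 1 ≤ (i : ℕ) → ∀ z : K, ((σ i) z).im = 0)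
    (hcomplete : ∀ φ : K →ₐ[ℚ] ℂ, (∀ z : K, φ z = (z : ℂ)) ∨
      (∀ z : K, φ z = conj (z : ℂ)) ∨
      ∃ i, (∀ z : K, φ z = σ i z) ∨ (∀ z : K, φ z = conj (σ i z))) :
    ∀ i : Fin (s - 1 + t), (i : ℕ) < s - 1 → σ i ≠ conjA.comp (σ i) := by
  classical
  letI : DecidableEq (K →ₐ[ℚ] ℂ) := Classical.decEq _
  intro i₀ hi₀ hcontra
  have hcard : Fintype.card (K →ₐ[ℚ] ℂ) = 2 * s + t := by
    rw [AlgHom.card ℚ K ℂ, hd]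
  set id0 : K →ₐ[ℚ] ℂ := K.val with hid0
  set pair : Fin (s - 1 + t) → Finset (K →ₐ[ℚ] ℂ) :=
    fun i => {σ i, conjA.comp (σ i)} with hpairdef
  have hsubset : (Finset.univ : Finset (K →ₐ[ℚ] ℂ)) ⊆
      insert id0 (insert (conjA.comp id0) (Finset.univ.biUnion pair)) := by
    intro φ _
    rcases hcomplete φ with h | h | ⟨i, h | h⟩
    · exact Finset.mem_insert.2 (Or.inl (AlgHom.ext h))
    · refine Finset.mem_insert.2 (Or.inr (Finset.mem_insert.2 (Or.inl (AlgHom.ext h))))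
    · refine Finset.mem_insert.2 (Or.inr (Finset.mem_insert.2 (Or.inr
        (Finset.mem_biUnion.2 ⟨i, Finset.mem_univ _, ?_⟩))))
      simp only [pair, Finset.mem_insert, Finset.mem_singleton]
      exact Or.inl (AlgHom.ext h)
    · refine Finset.mem_insert.2 (Or.inr (Finset.mem_insert.2 (Or.inr
        (Finset.mem_biUnion.2 ⟨i, Finset.mem_univ _, ?_⟩))))
      simp only [pair, Finset.mem_insert, Finset.mem_singleton]
      exact Or.inr (AlgHom.ext h)
  set A : Finset (Fin (s - 1 + t)) :=
    insert i₀ (Finset.univ.filter (fun i => s - 1 ≤ (i : ℕ))) with hA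
  have hApair : ∀ i ∈ A, (pair i).card = 1 := by
    intro i hi
    simp only [hA, Finset.mem_insert, Finset.mem_filter] at hi
    have hcollapse : σ i = conjA.comp (σ i) := by
      rcases hi with rfl | ⟨_, hi⟩
      · exact hcontra
      · ext z
        simp only [AlgHom.comp_apply, conjA_apply]
        exact ((Complex.conj_eq_iff_im).2 (hrealemb i hi z)).symm
    simp [pair, ← hcollapse]
  have hAcard : A.card = t + 1 := by
    rw [hA, Finset.card_insert_of_notMem (by simp [Finset.mem_filter]; omega)]
    have hinj : Function.Injective (Fin.natAdd (s-1) : Fin t → Fin (s - 1 + t)) := by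
      intro a b h
      have := congrArg Fin.val h
      simp only [Fin.natAdd] at this
      exact Fin.ext (by omega)
    have : (Finset.univ.filter (fun i : Fin (s - 1 + t) => s - 1 ≤ (i : ℕ))) =
        Finset.image (Fin.natAdd (s-1) : Fin t → Fin (s - 1 + t)) Finset.univ := by
      ext j
      simp only [Finset.mem_filter, Finset.mem_univ, true_and, Finset.mem_image]
      constructor
      · intro hj
        have hjt : (j : ℕ) - (s-1) < t := by omega
        refine ⟨⟨(j : ℕ) - (s-1), hjt⟩, ?_⟩
        apply Fin.ext
        simp only [Fin.natAdd]
        omega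
      · rintro ⟨a, rfl⟩
        simp [Fin.natAdd]
    rw [this, Finset.card_image_of_injective _ hinj, Finset.card_univ, Fintype.card_fin]
  have hpairsum : ∑ i : Fin (s - 1 + t), (pair i).card ≤ 2 * (s - 1 + t) - (t + 1) := by
    have h1 : ∑ i ∈ A, (pair i).card = A.card := by
      rw [Finset.sum_congr rfl hApair]; simp
    have h2 : ∑ i ∈ Aᶜ, (pair i).card ≤ 2 * Aᶜ.card := by
      calc ∑ i ∈ Aᶜ, (pair i).card ≤ ∑ _i ∈ Aᶜ, 2 := by
            refine Finset.sum_le_sum fun i _ => ?_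
            exact (Finset.card_insert_le _ _).trans (by simp)
        _ = 2 * Aᶜ.card := by rw [Finset.sum_const, smul_eq_mul, mul_comm]
    have h3 : ∑ i ∈ A, (pair i).card + ∑ i ∈ Aᶜ, (pair i).card
        = ∑ i : Fin (s - 1 + t), (pair i).card :=
      Finset.sum_add_sum_compl A _
    have h4 : A.card + Aᶜ.card = s - 1 + t := by
      rw [Finset.card_add_card_compl, Fintype.card_fin]
    omega
  have hle := Finset.card_le_card hsubset
  rw [Finset.card_univ, hcard] at hle
  have hb : (insert id0 (insert (conjA.comp id0) (Finset.univ.biUnion pair))).card ≤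
      2 + ∑ i : Fin (s - 1 + t), (pair i).card := by
    have c1 := Finset.card_insert_le id0 (insert (conjA.comp id0) (Finset.univ.biUnion pair))
    have c2 := Finset.card_insert_le (conjA.comp id0) (Finset.univ.biUnion pair)
    have c3 := Finset.card_biUnion_le (s := (Finset.univ : Finset (Fin (s - 1 + t)))) (t := pair)
    omega
  omega

set_option maxHeartbeats 1000000 in
/-- The real span of the image of the ring of integers contains every vector whose
last `t` coordinates are real. -/
lemma mem_span_image (K : IntermediateField ℚ ℂ) [FiniteDimensional ℚ K]
    (s t : ℕ)
    (σ : Fin (s - 1 + t) → (K →ₐ[ℚ] ℂ))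
    (hrealemb : ∀ i : Fin (s - 1 + t), s - 1 ≤ (i : ℕ) → ∀ z : K, ((σ i) z).im = 0)
    (hpair : ∀ i j, i ≠ j →
      (∃ z : K, σ i z ≠ σ j z) ∧ (∃ z : K, σ i z ≠ conj (σ j z)))
    (hcomplex : ∀ i : Fin (s - 1 + t), (i : ℕ) < s - 1 → σ i ≠ conjA.comp (σ i))
    (x : Fin (s - 1 + t) → ℂ) (hx : ∀ i : Fin (s - 1 + t), s - 1 ≤ (i : ℕ) → (x i).im = 0) :
    x ∈ Submodule.span ℝ {y : Fin (s - 1 + t) → ℂ |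
        ∃ z : K, IsIntegral ℤ (z : ℂ) ∧ y = fun i => σ i z} := by
  classical
  by_contra hxU
  set S : Set (Fin (s - 1 + t) → ℂ) := {y | ∃ z : K, IsIntegral ℤ (z : ℂ) ∧ y = fun i => σ i z} with hS
  set U : Submodule ℝ (Fin (s - 1 + t) → ℂ) := Submodule.span ℝ S with hU
  obtain ⟨f, hfx, hfU⟩ := U.exists_dual_map_eq_bot_of_notMem hxU inferInstance
  have hf0 : ∀ y ∈ S, f y = 0 := by
    intro y hy
    have : f y ∈ U.map f := Submodule.mem_map_of_mem (Submodule.subset_span hy)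
    rwa [hfU, Submodule.mem_bot] at this
  -- coordinates of f
  set a : Fin (s - 1 + t) → ℝ := fun i => f (Pi.single i (1:ℂ)) with ha
  set b : Fin (s - 1 + t) → ℝ := fun i => f (Pi.single i Complex.I) with hb
  have hdecomp : ∀ v : Fin (s - 1 + t) → ℂ, f v = ∑ i, ((v i).re * a i + (v i).im * b i) := by
    intro v
    have hbasis : v = ∑ i, ((v i).re • (Pi.single i (1:ℂ) : Fin (s - 1 + t) → ℂ)
        + (v i).im • (Pi.single i Complex.I : Fin (s - 1 + t) → ℂ)) := by
      funext j
      rw [Finset.sum_apply]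
      have hterm : ∀ i, ((v i).re • (Pi.single i (1:ℂ) : Fin (s - 1 + t) → ℂ)
          + (v i).im • (Pi.single i Complex.I : Fin (s - 1 + t) → ℂ)) j
          = (if j = i then v i else 0) := by
        intro i
        by_cases h : j = i
        · subst h
          simp [Pi.single_eq_same, Complex.real_smul, Complex.re_add_im]
        · simp [Pi.single_eq_of_ne h, if_neg h]
      rw [Finset.sum_congr rfl (fun i _ => hterm i), Finset.sum_ite_eq]
      simp
    conv_lhs => rw [hbasis]
    rw [map_sum]
    congr 1; funext i
    rw [map_add, map_smul, map_smul]
    simp [a, b, smul_eq_mul]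
  -- the complex coefficients
  set c : Fin (s - 1 + t) → ℂ := fun i => (a i : ℂ) - (b i : ℂ) * Complex.I with hc
  set Rel : K → ℂ := fun z => ∑ i, (c i * σ i z + conj (c i) * conj (σ i z)) with hRel
  have hterm2 : ∀ (i : Fin (s - 1 + t)) (u : ℂ),
      c i * u + conj (c i) * conj u = ((2 * (u.re * a i + u.im * b i) : ℝ) : ℂ) := by
    intro i u
    apply Complex.ext <;>
      simp [hc, Complex.ext_iff, Complex.add_re, Complex.mul_re, Complex.mul_im] <;> ring
  have hRelf : ∀ z : K, Rel z = ((2 * f (fun i => σ i z) : ℝ) : ℂ) := by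
    intro z
    rw [hRel]
    simp only
    rw [Finset.sum_congr rfl (fun i _ => hterm2 i (σ i z))]
    rw [hdecomp (fun i => σ i z)]
    push_cast
    rw [Finset.mul_sum]
  have hRelint : ∀ z : K, IsIntegral ℤ (z : ℂ) → Rel z = 0 := by
    intro z hz
    rw [hRelf]
    have : f (fun i => σ i z) = 0 := hf0 _ ⟨z, hz, rfl⟩
    rw [this]; simp
  have hRelall : ∀ z : K, Rel z = 0 := by
    intro z
    have halg : IsAlgebraic ℤ z := by
      rw [IsFractionRing.isAlgebraic_iff ℤ ℚ K]
      exact (IsIntegral.of_finite ℚ z).isAlgebraic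
    obtain ⟨w, y, hy0, hwy⟩ : ∃ w : integralClosure ℤ K, ∃ y : ℤ, y ≠ 0 ∧
        algebraMap ℤ K y * z = w := by
      obtain ⟨y, hy0, hyint⟩ := halg.exists_integral_multiple
      exact ⟨⟨y • z, hyint⟩, y, hy0, (Algebra.smul_def y z).symm⟩
    have hwint : IsIntegral ℤ ((w : K) : ℂ) := by
      have : IsIntegral ℤ (w : K) := w.2
      exact this.map (K.val.toRingHom.toIntAlgHom)
    have h1 : Rel ((algebraMap ℤ K y) * z) = 0 := by
      rw [hwy]; exact hRelint _ hwint
    have h2 : ∀ i : Fin (s - 1 + t), σ i ((algebraMap ℤ K y) * z) = (y : ℂ) * σ i z := by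
      intro i
      rw [map_mul]
      congr 1
      rw [show (algebraMap ℤ K y) = ((y : ℤ) : K) by simp [algebraMap_int_eq, map_intCast],
        map_intCast]
    have h3 : Rel ((algebraMap ℤ K y) * z) = (y : ℂ) * Rel z := by
      rw [hRel]
      simp only
      rw [Finset.mul_sum]
      congr 1; funext i
      rw [h2 i, map_mul]
      have : conj ((y : ℤ) : ℂ) = ((y : ℤ) : ℂ) := by
        rw [Complex.conj_eq_iff_im]; simp
      rw [this]; ring
    rw [h1] at h3
    have hy0' : ((y : ℤ) : ℂ) ≠ 0 := by exact_mod_cast hy0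
    exact (mul_eq_zero.mp h3.symm).resolve_left hy0'
  -- Dedekind's independence of characters
  set κ := Fin (s - 1 + t) ⊕ {i : Fin (s - 1 + t) // (i : ℕ) < s - 1} with hκ
  set Φ : κ → (K →* ℂ) := fun k => match k with
    | Sum.inl i => ((σ i : K →+* ℂ) : K →* ℂ)
    | Sum.inr i => ((conjA.comp (σ i.1) : K →+* ℂ) : K →* ℂ) with hΦ
  have hΦapply : (∀ i z, Φ (Sum.inl i) z = σ i z) ∧
      (∀ i z, Φ (Sum.inr i) z = conj (σ i.1 z)) := ⟨fun _ _ => rfl, fun _ _ => rfl⟩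
  have hΦinj : Function.Injective Φ := by
    intro k l hkl
    have hpt : ∀ z, Φ k z = Φ l z := fun z => by rw [hkl]
    match k, l with
    | Sum.inl i, Sum.inl j =>
      congr 1
      by_contra hij
      obtain ⟨z, hz⟩ := (hpair i j hij).1
      refine hz ?_
      have h1 : σ i z = σ j z := hpt z
      exact h1
    | Sum.inl i, Sum.inr j =>
      exfalso
      by_cases hij : i = (j : Fin (s - 1 + t))
      · refine hcomplex i (by rw [hij]; exact j.2) (AlgHom.ext fun z => ?_)
        have h1 : σ i z = conj (σ (j : Fin (s - 1 + t)) z) := hpt z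
        rw [← hij] at h1
        exact h1
      · obtain ⟨z, hz⟩ := (hpair i (j : Fin (s - 1 + t)) hij).2
        refine hz ?_
        have h1 : σ i z = conj (σ (j : Fin (s - 1 + t)) z) := hpt z
        exact h1
    | Sum.inr i, Sum.inl j =>
      exfalso
      by_cases hij : j = (i : Fin (s - 1 + t))
      · refine hcomplex j (by rw [hij]; exact i.2) (AlgHom.ext fun z => ?_)
        have h1 : conj (σ (i : Fin (s - 1 + t)) z) = σ j z := hpt z
        rw [← hij] at h1
        exact h1.symm
      · obtain ⟨z, hz⟩ := (hpair j (i : Fin (s - 1 + t)) hij).2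
        refine hz ?_
        have h1 : conj (σ (i : Fin (s - 1 + t)) z) = σ j z := hpt z
        exact h1.symm
    | Sum.inr i, Sum.inr j =>
      congr 1
      apply Subtype.ext
      by_contra hij
      obtain ⟨z, hz⟩ := (hpair (i : Fin (s - 1 + t)) (j : Fin (s - 1 + t))
        (fun h => hij h)).1
      refine hz ?_
      have h1 : conj (σ (i : Fin (s - 1 + t)) z) = conj (σ (j : Fin (s - 1 + t)) z) := hpt z
      simpa using congrArg conj h1
  have hLI : LinearIndependent ℂ (fun k : κ => (Φ k : K → ℂ)) :=
    (linearIndependent_monoidHom K ℂ).comp Φ hΦinj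
  set g : κ → ℂ := fun k => match k with
    | Sum.inl i => if (i : ℕ) < s - 1 then c i else c i + conj (c i)
    | Sum.inr i => conj (c i.1) with hg
  have hgsum : ∑ k : κ, g k • (Φ k : K → ℂ) = 0 := by
    funext z
    rw [Pi.zero_apply, Finset.sum_apply]
    have : ∀ k : κ, (g k • (Φ k : K → ℂ)) z = g k * Φ k z := fun k => rfl
    rw [Finset.sum_congr rfl (fun k _ => this k), Fintype.sum_sum_type]
    have hrel := hRelall z
    rw [hRel] at hrel
    simp only at hrel
    -- split sums according to the condition i < s - 1
    rw [← Finset.sum_filter_add_sum_filter_not Finset.univ (fun i : Fin (s - 1 + t) => (i : ℕ) < s - 1)]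
      at hrel ⊢
    have e1 : ∑ i ∈ Finset.univ.filter (fun i : Fin (s - 1 + t) => (i : ℕ) < s - 1),
        g (Sum.inl i) * Φ (Sum.inl i) z
        = ∑ i ∈ Finset.univ.filter (fun i : Fin (s - 1 + t) => (i : ℕ) < s - 1), c i * σ i z := by
      refine Finset.sum_congr rfl fun i hi => ?_
      rw [Finset.mem_filter] at hi
      simp [hg, if_pos hi.2, hΦapply.1]
    have e2 : ∑ i ∈ Finset.univ.filter (fun i : Fin (s - 1 + t) => ¬ (i : ℕ) < s - 1),
        g (Sum.inl i) * Φ (Sum.inl i) z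
        = ∑ i ∈ Finset.univ.filter (fun i : Fin (s - 1 + t) => ¬ (i : ℕ) < s - 1),
            (c i * σ i z + conj (c i) * conj (σ i z)) := by
      refine Finset.sum_congr rfl fun i hi => ?_
      rw [Finset.mem_filter] at hi
      have hreal : conj (σ i z) = σ i z :=
        (Complex.conj_eq_iff_im).2 (hrealemb i (by omega) z)
      simp only [hg, if_neg hi.2, hΦapply.1]
      rw [hreal]; ring
    have e3 : ∑ i : {i : Fin (s - 1 + t) // (i : ℕ) < s - 1},
        g (Sum.inr i) * Φ (Sum.inr i) z
        = ∑ i ∈ Finset.univ.filter (fun i : Fin (s - 1 + t) => (i : ℕ) < s - 1),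
            conj (c i) * conj (σ i z) :=
      (Finset.sum_subtype _ (fun i => by simp) (fun i => conj (c i) * conj (σ i z))).symm
    rw [e1, e2, e3]
    rw [Finset.sum_add_distrib] at hrel
    linear_combination hrel
  have hg0 : ∀ k : κ, g k = 0 := Fintype.linearIndependent_iff.mp hLI g hgsum
  -- extract the coefficient information
  have hab : ∀ i : Fin (s - 1 + t), a i = 0 ∧ ((i : ℕ) < s - 1 → b i = 0) := by
    intro i
    by_cases hi : (i : ℕ) < s - 1
    · have h1 := hg0 (Sum.inl i)
      simp only [hg, if_pos hi] at h1
      have hre := congrArg Complex.re h1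
      have him := congrArg Complex.im h1
      simp [hc] at hre him
      exact ⟨hre, fun _ => him⟩
    · have h1 := hg0 (Sum.inl i)
      simp only [hg, if_neg hi] at h1
      have hre := congrArg Complex.re h1
      simp [hc, Complex.add_re, Complex.conj_re] at hre
      constructor
      · linarith
      · intro h; exact absurd h hi
  -- conclude f x = 0
  apply hfx
  rw [hdecomp x]
  refine Finset.sum_eq_zero fun i _ => ?_
  rcases hab i with ⟨ha0, hb0⟩
  by_cases hi : (i : ℕ) < s - 1
  · rw [ha0, hb0 hi]; ring
  · rw [ha0, hx i (by omega)]; ring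


open NumberField

set_option maxHeartbeats 1600000 in
/-- Density of the image of the ring of integers under the star map.

K ⊆ ℂ is a number field closed under complex conjugation, not contained in ℝ, of degree
d = 2s + t ≥ 4, with s pairs of complex embeddings and t real embeddings. The family
σ : Fin (s−1+t) → (K →ₐ[ℚ] ℂ) collects all embeddings of K into ℂ except the identity
and complex conjugation, one from each pair of complex-conjugate embeddings (the last t
of them being the real embeddings). Then the image of the ring of integers 𝒪_K under
the star map z ↦ (σ i z)_i is dense in ℂ^{s−1} × ℝ^t, i.e. every point of
Fin (s−1+t) → ℂ whose last t coordinates are real lies in the closure of the image. -/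
theorem star_image_dense (K : IntermediateField ℚ ℂ) [FiniteDimensional ℚ K]
    (s t : ℕ) (hs : 1 ≤ s) (hd : Module.finrank ℚ K = 2 * s + t) (h4 : 4 ≤ 2 * s + t)
    (hconjK : ∀ z : ℂ, z ∈ K → conj z ∈ K)
    (hnotreal : ∃ z : ℂ, z ∈ K ∧ z.im ≠ 0)
    (σ : Fin (s - 1 + t) → (K →ₐ[ℚ] ℂ))
    (hrealemb : ∀ i : Fin (s - 1 + t), s - 1 ≤ (i : ℕ) → ∀ z : K, ((σ i) z).im = 0)
    (hnid : ∀ i, ∃ z : K, σ i z ≠ (z : ℂ))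
    (hnconj : ∀ i, ∃ z : K, σ i z ≠ conj (z : ℂ))
    (hpair : ∀ i j, i ≠ j →
      (∃ z : K, σ i z ≠ σ j z) ∧ (∃ z : K, σ i z ≠ conj (σ j z)))
    (hcomplete : ∀ φ : K →ₐ[ℚ] ℂ, (∀ z : K, φ z = (z : ℂ)) ∨
      (∀ z : K, φ z = conj (z : ℂ)) ∨
      ∃ i, (∀ z : K, φ z = σ i z) ∨ (∀ z : K, φ z = conj (σ i z))) :
    ∀ x : Fin (s - 1 + t) → ℂ, (∀ i : Fin (s - 1 + t), s - 1 ≤ (i : ℕ) → (x i).im = 0) →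
      x ∈ closure {y : Fin (s - 1 + t) → ℂ |
        ∃ z : K, IsIntegral ℤ (z : ℂ) ∧ y = fun i => σ i z} := by
  classical
  intro x hx
  haveI : NumberField K := ⟨⟩
  have hcomplex := sigma_complex K s t hs hd σ hrealemb hcomplete
  -- the image set and its subgroup structure
  set S : Set (Fin (s - 1 + t) → ℂ) := {y : Fin (s - 1 + t) → ℂ |
    ∃ z : K, IsIntegral ℤ (z : ℂ) ∧ y = fun i => σ i z} with hSdef
  have hzero : (0 : Fin (s - 1 + t) → ℂ) ∈ S := by
    refine ⟨0, by simpa using isIntegral_zero, ?_⟩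
    funext i; simp
  have hadd : ∀ p q, p ∈ S → q ∈ S → p + q ∈ S := by
    rintro p q ⟨z1, h1, rfl⟩ ⟨z2, h2, rfl⟩
    refine ⟨z1 + z2, ?_, ?_⟩
    · have : ((z1 + z2 : K) : ℂ) = (z1 : ℂ) + (z2 : ℂ) := by push_cast; ring
      rw [this]; exact h1.add h2
    · funext i; simp [map_add]
  have hneg : ∀ p, p ∈ S → -p ∈ S := by
    rintro p ⟨z1, h1, rfl⟩
    refine ⟨-z1, ?_, ?_⟩
    · have : ((-z1 : K) : ℂ) = -(z1 : ℂ) := by push_cast; ring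
      rw [this]; exact h1.neg
    · funext i; simp [map_neg]
  let G : AddSubgroup (Fin (s - 1 + t) → ℂ) :=
    { carrier := S
      zero_mem' := hzero
      add_mem' := fun hp hq => hadd _ _ hp hq
      neg_mem' := fun hp => hneg _ hp }
  show x ∈ closure (G : Set (Fin (s - 1 + t) → ℂ))
  -- the contracting element θ
  set w₀ : InfinitePlace K := InfinitePlace.mk (K.val : K →+* ℂ) with hw₀
  obtain ⟨u, hu⟩ := Units.dirichletUnitTheorem.exists_unit K w₀
  set θ : K := algebraMap (𝓞 K) K (u : 𝓞 K) with hθdef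
  have hθint : IsIntegral ℤ θ := RingOfIntegers.isIntegral_coe _
  have hθC : IsIntegral ℤ (θ : ℂ) := hθint.map K.val.toRingHom.toIntAlgHom
  have hθ0 : θ ≠ 0 := by
    rw [hθdef, ne_eq, RingOfIntegers.coe_eq_zero_iff]
    exact Units.ne_zero u
  have hσθ0 : ∀ i, σ i θ ≠ 0 := fun i h =>
    hθ0 ((σ i).toRingHom.injective (by show σ i θ = σ i 0; rw [h, map_zero]))
  have hwne : ∀ i, InfinitePlace.mk ((σ i : K →+* ℂ)) ≠ w₀ := by
    intro i heq
    rw [hw₀, InfinitePlace.mk_eq_iff] at heq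
    rcases heq with h | h
    · obtain ⟨z, hz⟩ := hnid i
      exact hz (RingHom.congr_fun h z)
    · obtain ⟨z, hz⟩ := hnconj i
      have h1 : conj (σ i z) = (z : ℂ) := RingHom.congr_fun h z
      apply hz
      rw [← h1, Complex.conj_conj]
  have hsmall : ∀ i, ‖σ i θ‖ < 1 := by
    intro i
    have h1 := hu (InfinitePlace.mk ((σ i : K →+* ℂ))) (hwne i)
    have hpos : 0 < ‖σ i θ‖ := norm_pos_iff.mpr (hσθ0 i)
    have h2 : (InfinitePlace.mk ((σ i : K →+* ℂ))) θ = ‖σ i θ‖ :=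
      InfinitePlace.apply _ _
    rw [h2] at h1
    exact (Real.log_neg_iff hpos).mp h1
  have hθreal : ∀ i : Fin (s - 1 + t), s - 1 ≤ (i : ℕ) → conj (σ i θ) = σ i θ :=
    fun i hi => Complex.conj_eq_iff_im.2 (hrealemb i hi θ)
  -- degenerate case
  rcases Nat.eq_zero_or_pos (s - 1 + t) with hm0 | hmpos
  · apply subset_closure
    refine ⟨0, by simpa using isIntegral_zero, ?_⟩
    funext i
    exact absurd i.isLt (by omega)
  have hne : (Finset.univ : Finset (Fin (s - 1 + t))).Nonempty :=
    ⟨⟨0, hmpos⟩, Finset.mem_univ _⟩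
  set q : ℝ := Finset.univ.sup' hne (fun i => ‖σ i θ‖) with hq
  have hq1 : q < 1 := (Finset.sup'_lt_iff hne).mpr (fun i _ => hsmall i)
  have hqi : ∀ i, ‖σ i θ‖ ≤ q := fun i =>
    Finset.le_sup' (fun i => ‖σ i θ‖) (Finset.mem_univ i)
  have hq0 : 0 ≤ q := le_trans (norm_nonneg _) (hqi ⟨0, hmpos⟩)
  -- finite spanning family
  obtain ⟨k, v, hvS, hvspan⟩ := exists_finite_spanning_family S
  apply mem_closure_of_small_spanning (k := k) G x
  intro ε hε
  set C : ℝ := 1 + ∑ j, ‖v j‖ with hC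
  have hC0 : 0 < C := by positivity
  have hvC : ∀ j, ‖v j‖ ≤ C := by
    intro j
    have h1 : ‖v j‖ ≤ ∑ j, ‖v j‖ :=
      Finset.single_le_sum (fun j _ => norm_nonneg (v j)) (Finset.mem_univ j)
    linarith
  obtain ⟨n, hn⟩ := exists_pow_lt_of_lt_one (div_pos hε hC0) hq1
  set c : Fin (s - 1 + t) → ℂ := fun i => (σ i θ) ^ n with hcdef
  have hc0 : ∀ i, c i ≠ 0 := fun i => pow_ne_zero _ (hσθ0 i)
  have habsc : ∀ i, ‖c i‖ ≤ q ^ n := by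
    intro i
    rw [hcdef]
    simp only [norm_pow]
    exact pow_le_pow_left₀ (norm_nonneg _) (hqi i) n
  refine ⟨fun j => fun i => c i * v j i, fun j => ⟨?_, ?_⟩, ?_⟩
  · -- membership in G
    obtain ⟨z, hzint, hzeq⟩ := hvS j
    refine ⟨θ ^ n * z, ?_, ?_⟩
    · have : ((θ ^ n * z : K) : ℂ) = (θ : ℂ) ^ n * (z : ℂ) := by push_cast; ring
      rw [this]
      exact (hθC.pow n).mul hzint
    · funext i
      show c i * v j i = σ i (θ ^ n * z)
      rw [map_mul, map_pow, hzeq]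
  · -- norm bound
    rw [pi_norm_le_iff_of_nonneg (le_of_lt hε)]
    intro i
    rw [norm_mul]
    have h1 : ‖c i‖ ≤ q ^ n := habsc i
    have h2 : ‖v j i‖ ≤ C := le_trans (norm_le_pi_norm (v j) i) (hvC j)
    calc ‖c i‖ * ‖v j i‖ ≤ (ε / C) * C := by
          apply mul_le_mul (le_of_lt (lt_of_le_of_lt h1 hn)) h2 (norm_nonneg _)
          positivity
      _ = ε := div_mul_cancel₀ ε (ne_of_gt hC0)
  · -- span membership
    have heq : (fun j => fun i => c i * v j i) = fun j => piMulLinEquiv c hc0 (v j) := rfl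
    rw [heq]
    have hrange : Set.range (fun j => piMulLinEquiv c hc0 (v j)) =
        (piMulLinEquiv c hc0) '' (Set.range v) := by
      rw [← Set.range_comp]; rfl
    rw [hrange]
    rw [show ((piMulLinEquiv c hc0) '' (Set.range v) : Set (Fin (s - 1 + t) → ℂ)) =
      ((piMulLinEquiv c hc0).toLinearMap '' (Set.range v)) from rfl]
    rw [← Submodule.map_span, hvspan]
    rw [Submodule.mem_map_equiv]
    apply mem_span_image K s t σ hrealemb hpair hcomplex
    intro i hi
    rw [← Complex.conj_eq_iff_im]
    have h1 : (piMulLinEquiv c hc0).symm x i = (c i)⁻¹ * x i :=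
      piMulLinEquiv_symm_apply c hc0 x i
    rw [h1, map_mul, map_inv₀]
    have h2 : conj (c i) = c i := by
      rw [hcdef]; simp only [map_pow]; rw [hθreal i hi]
    rw [h2, Complex.conj_eq_iff_im.2 (hx i hi)]
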